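/- Let k, l be integers with k ≥ 1 and l ≥ 1, I the m×m identity matrix, and let φ : ℝ × ℤ → Mat(m×m, ℂ) be entrywise differentiable in t, satisfying (φ_{(k)} − φ)_t = (φ_{(l)} − φ)(φ_{(k)} − φ + I) − (φ_{(k)} − φ + I)(φ_{(l)} − φ)_{(k−l)}. Then W := φ_{(1)} − φ + (1/k) I satisfies the generalized Volterra lattice equation (Σ_{i=0}^{k−1} W_{(i)})_t = (Σ_{i=0}^{l−1} W_{(i)})(Σ_{i=0}^{k−1} W_{(i)}) − (Σ_{i=0}^{k−1} W_{(i)})(Σ_{i=k−l}^{k−1} W_{(i)}). -/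

import Mathlib

open Matrix

/-- if `φ` is entrywise `t`-differentiable (derivative `φt`) and satisfies
`(φ_{(k)} − φ)_t = (φ_{(l)} − φ)(φ_{(k)} − φ + I) − (φ_{(k)} − φ + I)(φ_{(l)} − φ)_{(k−l)}`
with `k ≥ 1`, `l ≥ 1`, then `W := φ_{(1)} − φ + (1/k) I` satisfies
`(Σ_{i=0}^{k−1} W_{(i)})_t
   = (Σ_{i=0}^{l−1} W_{(i)})(Σ_{i=0}^{k−1} W_{(i)}) − (Σ_{i=0}^{k−1} W_{(i)})(Σ_{i=k−l}^{k−1} W_{(i)})`. -/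
theorem stmt_4 (m : ℕ) (k l : ℤ) (hk : 1 ≤ k) (hl : 1 ≤ l)
    (φ φt : ℝ → ℤ → Matrix (Fin m) (Fin m) ℂ)
    (hφt : ∀ t j (a b : Fin m), HasDerivAt (fun s => φ s j a b) (φt t j a b) t)
    (heq : ∀ t j,
      φt t (j + k) - φt t j
        = (φ t (j + l) - φ t j) * (φ t (j + k) - φ t j + 1)
          - (φ t (j + k) - φ t j + 1) * (φ t (j + k) - φ t (j + (k - l))))
    (W : ℝ → ℤ → Matrix (Fin m) (Fin m) ℂ)
    (hW : ∀ t j, W t j = φ t (j + 1) - φ t j + ((k : ℂ))⁻¹ • (1 : Matrix (Fin m) (Fin m) ℂ)) :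
    ∀ t j (a b : Fin m),
      HasDerivAt (fun s => (∑ i ∈ Finset.range k.toNat, W s (j + (i : ℤ))) a b)
        (((∑ i ∈ Finset.range l.toNat, W t (j + (i : ℤ)))
            * (∑ i ∈ Finset.range k.toNat, W t (j + (i : ℤ)))
          - (∑ i ∈ Finset.range k.toNat, W t (j + (i : ℤ)))
            * (∑ i ∈ Finset.range l.toNat, W t (j + (k - l) + (i : ℤ)))) a b) t := by
  intro t j a b
  have hk0 : (k : ℂ) ≠ 0 := by
    exact_mod_cast (by omega : k ≠ 0)
  have hktn : ((k.toNat : ℤ)) = k := Int.toNat_of_nonneg (by omega)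
  have hltn : ((l.toNat : ℤ)) = l := Int.toNat_of_nonneg (by omega)
  -- telescoping sum of W
  have hsum : ∀ (x : ℤ) (n : ℕ), ∑ i ∈ Finset.range n, W t (x + (i : ℤ))
      = φ t (x + n) - φ t x + (n : ℂ) • ((k : ℂ))⁻¹ • (1 : Matrix (Fin m) (Fin m) ℂ) := by
    intro x n
    have h1 : ∀ i ∈ Finset.range n, W t (x + (i : ℤ))
        = (φ t (x + ((i + 1 : ℕ) : ℤ)) - φ t (x + (i : ℤ)))
          + ((k : ℂ))⁻¹ • (1 : Matrix (Fin m) (Fin m) ℂ) := by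
      intro i _
      rw [hW]
      congr 3
      push_cast; ring
    rw [Finset.sum_congr rfl h1, Finset.sum_add_distrib,
      Finset.sum_range_sub (fun i : ℕ => φ t (x + (i : ℤ))), Finset.sum_const]
    simp [← Nat.cast_smul_eq_nsmul (R := ℂ)]
  have hsumk : ∑ i ∈ Finset.range k.toNat, W t (j + (i : ℤ))
      = φ t (j + k) - φ t j + 1 := by
    rw [hsum, hktn]
    have : ((k.toNat : ℂ)) = (k : ℂ) := by exact_mod_cast congrArg (fun z : ℤ => (z : ℂ)) hktn
    rw [this, smul_smul, mul_inv_cancel₀ hk0, one_smul]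
  have hlC : ((l.toNat : ℂ)) = (l : ℂ) := by exact_mod_cast congrArg (fun z : ℤ => (z : ℂ)) hltn
  have hsuml : ∑ i ∈ Finset.range l.toNat, W t (j + (i : ℤ))
      = φ t (j + l) - φ t j + (l : ℂ) • ((k : ℂ))⁻¹ • (1 : Matrix (Fin m) (Fin m) ℂ) := by
    rw [hsum, hltn, hlC]
  have hsuml' : ∑ i ∈ Finset.range l.toNat, W t (j + (k - l) + (i : ℤ))
      = φ t (j + k) - φ t (j + (k - l))
        + (l : ℂ) • ((k : ℂ))⁻¹ • (1 : Matrix (Fin m) (Fin m) ℂ) := by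
    rw [hsum, hltn, hlC]
    congr 3
    ring
  -- the derivative of the entrywise sum
  have hd : HasDerivAt
      (fun s => ∑ i ∈ Finset.range k.toNat, (W s (j + (i : ℤ))) a b)
      (∑ i ∈ Finset.range k.toNat,
        (φt t (j + (i : ℤ) + 1) a b - φt t (j + (i : ℤ)) a b)) t := by
    apply HasDerivAt.fun_sum
    intro i _
    have hfe : (fun s => (W s (j + (i : ℤ))) a b)
        = fun s => φ s (j + (i : ℤ) + 1) a b - φ s (j + (i : ℤ)) a b
          + (((k : ℂ))⁻¹ • (1 : Matrix (Fin m) (Fin m) ℂ)) a b := by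
      funext s; rw [hW]; simp [Matrix.sub_apply, Matrix.add_apply]
    rw [hfe]
    exact ((hφt t _ a b).sub (hφt t _ a b)).add_const _
  -- telescope the derivative value
  have htel : ∑ i ∈ Finset.range k.toNat,
      (φt t (j + (i : ℤ) + 1) a b - φt t (j + (i : ℤ)) a b)
      = φt t (j + k) a b - φt t j a b := by
    have h2 : ∀ i : ℕ, j + (i : ℤ) + 1 = j + ((i + 1 : ℕ) : ℤ) := by
      intro i; push_cast; ring
    have h1 : ∀ i ∈ Finset.range k.toNat,
        φt t (j + (i : ℤ) + 1) a b - φt t (j + (i : ℤ)) a b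
          = (fun n : ℕ => φt t (j + (n : ℤ)) a b) (i + 1)
            - (fun n : ℕ => φt t (j + (n : ℤ)) a b) i := by
      intro i _; rw [h2 i]
    rw [Finset.sum_congr rfl h1, Finset.sum_range_sub (fun n : ℕ => φt t (j + (n : ℤ)) a b)]
    simp [hktn]
  -- matrix algebra: the scalar parts cancel
  have key : ((φ t (j + l) - φ t j + (l : ℂ) • ((k : ℂ))⁻¹ • (1 : Matrix (Fin m) (Fin m) ℂ))
        * (φ t (j + k) - φ t j + 1)
      - (φ t (j + k) - φ t j + 1)
        * (φ t (j + k) - φ t (j + (k - l))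
            + (l : ℂ) • ((k : ℂ))⁻¹ • (1 : Matrix (Fin m) (Fin m) ℂ)))
      = φt t (j + k) - φt t j := by
    rw [heq t j]
    simp only [add_mul, mul_add, smul_mul_assoc, mul_smul_comm, one_mul, mul_one,
      smul_add, smul_sub]
    abel
  have hfun : (fun s => (∑ i ∈ Finset.range k.toNat, W s (j + (i : ℤ))) a b)
      = fun s => ∑ i ∈ Finset.range k.toNat, (W s (j + (i : ℤ))) a b := by
    funext s; exact Matrix.sum_apply a b _ _
  rw [hfun, hsumk, hsuml, hsuml', key, Matrix.sub_apply, ← htel]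
  exact hd
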